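/- If a concrete object ō allocated in available code is ever returned by a library call (r_m ↪ ō for some library function m at some trace point), then at some earlier trace point ō was passed as an argument to some library call x'←m'(y') with y'↪ō, assuming library code cannot allocate ō and the disjoint fields assumption holds. -/
import Mathlib


/-- Events (statement steps): allocation, assignment, load, store, and library
call (which assigns the returned concrete object `c` to `x`). -/
inductive Ev (V F M O CO : Type) where
  | alloc (x : V) (o : O) (c : CO)
  | assign (x y : V)
  | load (x y : V) (f : F)
  | store (x : V) (f : F) (y : V)
  | call (x : V) (m : M) (y : V) (c : CO)

/-- A state: environment and heap. -/
structure St (V F CO : Type) where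
  env : V → Option CO
  heap : CO → F → Option CO

/-- Small-step semantics of a single statement. Since only program code is
modeled (library effects appear only as call-return events), all heap writes use
program fields: the disjoint fields assumption is built in. -/
def step {V F M O CO : Type} [DecidableEq V] [DecidableEq F] [DecidableEq CO]
    (σ : St V F CO) : Ev V F M O CO → St V F CO
  | .alloc x _ c => ⟨Function.update σ.env x (some c), σ.heap⟩
  | .assign x y => ⟨Function.update σ.env x (σ.env y), σ.heap⟩
  | .load x y f => ⟨Function.update σ.env x (σ.env y >>= fun c => σ.heap c f), σ.heap⟩
  | .store x f y =>
      ⟨σ.env, fun c g => if σ.env x = some c ∧ g = f then σ.env y else σ.heap c g⟩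
  | .call x _ _ c => ⟨Function.update σ.env x (some c), σ.heap⟩

def runs {V F M O CO : Type} [DecidableEq V] [DecidableEq F] [DecidableEq CO]
    (σ0 : St V F CO) (tr : List (Ev V F M O CO)) : St V F CO :=
  tr.foldl step σ0

/-- The state reached after the first `i` steps of the trace. -/
def stateAt {V F M O CO : Type} [DecidableEq V] [DecidableEq F] [DecidableEq CO]
    (σ0 : St V F CO) (tr : List (Ev V F M O CO)) (i : ℕ) : St V F CO :=
  runs σ0 (tr.take i)

/-- Well-formedness of events in the two-world model: variables are either
program variables (`Sum.inl`) or library-internal variables (`Sum.inr`), and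
fields are program fields or library fields. Allocations occur only in available
code (to program variables); loads and stores are either entirely in program code
(program fields) or entirely in library code (library fields) — the disjoint
fields assumption; assignments may bridge the two worlds (argument passing and
return passing); the `call` event form is unused. -/
def WfEv {V LV F LF M O CO : Type} :
    Ev (V ⊕ LV) (F ⊕ LF) M O CO → Prop
  | .alloc x _ _ => ∃ v : V, x = Sum.inl v
  | .assign _ _ => True
  | .load x y f =>
      (∃ (a b : V) (g : F), x = Sum.inl a ∧ y = Sum.inl b ∧ f = Sum.inl g) ∨
      (∃ (a b : LV) (g : LF), x = Sum.inr a ∧ y = Sum.inr b ∧ f = Sum.inr g)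
  | .store x f y =>
      (∃ (a b : V) (g : F), x = Sum.inl a ∧ y = Sum.inl b ∧ f = Sum.inl g) ∨
      (∃ (a b : LV) (g : LF), x = Sum.inr a ∧ y = Sum.inr b ∧ f = Sum.inr g)
  | .call _ _ _ _ => False


lemma stateAt_succ {V F M O CO : Type} [DecidableEq V] [DecidableEq F] [DecidableEq CO]
    (σ0 : St V F CO) (tr : List (Ev V F M O CO)) (i : ℕ) :
    stateAt σ0 tr (i+1) = (tr[i]?).elim (stateAt σ0 tr i) (step (stateAt σ0 tr i)) := by
  unfold stateAt runs
  rw [List.take_succ, List.foldl_append]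
  cases h : tr[i]? <;> simp

/-- If a concrete object `c` allocated in available code is ever held
by a library variable — in particular if it is returned by a library call, i.e.
the return variable `ret m` of some library function points to `c` at some trace
point `i` — then at some earlier trace point `c` was passed as an argument to
library code: some assignment from a program variable `y` (with `y ↪ c` at that
point) into a library variable occurred. This assumes library code cannot allocate
`c` (allocations only occur at program variables) and the disjoint fields
assumption. -/
theorem stmt9 {V LV F LF M O CO : Type}
    [DecidableEq V] [DecidableEq LV] [DecidableEq F] [DecidableEq LF] [DecidableEq CO]
    (ret : M → LV)
    (σ0 : St (V ⊕ LV) (F ⊕ LF) CO)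
    (hEnv : ∀ v, σ0.env v = none) (hHeap : ∀ c f, σ0.heap c f = none)
    (tr : List (Ev (V ⊕ LV) (F ⊕ LF) M O CO))
    (hwf : ∀ e ∈ tr, WfEv e)
    (hFresh : ∀ i x o c, tr[i]? = some (.alloc x o c) →
      (∀ v, (stateAt σ0 tr i).env v ≠ some c) ∧
      (∀ c' f, (stateAt σ0 tr i).heap c' f ≠ some c))
    (i : ℕ) (m : M) (c : CO)
    (hret : (stateAt σ0 tr i).env (Sum.inr (ret m)) = some c)
    (hprog : ∃ (x' : V) (o : O), Ev.alloc (Sum.inl x') o c ∈ tr) :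
    ∃ j < i, ∃ (l : LV) (y : V),
      tr[j]? = some (Ev.assign (Sum.inr l) (Sum.inl y)) ∧
      (stateAt σ0 tr j).env (Sum.inl y) = some c := by
  suffices H : ∀ i,
      (∀ l : LV, (stateAt σ0 tr i).env (Sum.inr l) = some c →
        ∃ j < i, ∃ (l : LV) (y : V),
          tr[j]? = some (Ev.assign (Sum.inr l) (Sum.inl y)) ∧
          (stateAt σ0 tr j).env (Sum.inl y) = some c) ∧
      (∀ (c' : CO) (g : LF), (stateAt σ0 tr i).heap c' (Sum.inr g) = some c →
        ∃ j < i, ∃ (l : LV) (y : V),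
          tr[j]? = some (Ev.assign (Sum.inr l) (Sum.inl y)) ∧
          (stateAt σ0 tr j).env (Sum.inl y) = some c) by
    exact (H i).1 _ hret
  intro i
  induction i with
  | zero =>
    constructor
    · intro l h; simp [stateAt, runs, hEnv] at h
    · intro c' g h; simp [stateAt, runs, hHeap] at h
  | succ i ih =>
    have mono : (∃ j < i, ∃ (l : LV) (y : V),
        tr[j]? = some (Ev.assign (Sum.inr l) (Sum.inl y)) ∧
        (stateAt σ0 tr j).env (Sum.inl y) = some c) →
        ∃ j < i + 1, ∃ (l : LV) (y : V),
        tr[j]? = some (Ev.assign (Sum.inr l) (Sum.inl y)) ∧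
        (stateAt σ0 tr j).env (Sum.inl y) = some c := by
      rintro ⟨j, hj, rest⟩; exact ⟨j, Nat.lt_succ_of_lt hj, rest⟩
    rw [stateAt_succ]
    cases h : tr[i]? with
    | none =>
      exact ⟨fun l hl => mono (ih.1 l hl), fun c' g hg => mono (ih.2 c' g hg)⟩
    | some e =>
      have hmem : e ∈ tr := by
        rcases List.getElem?_eq_some_iff.mp h with ⟨hi, he⟩
        exact he ▸ List.getElem_mem hi
      have hwfe : WfEv e := hwf e hmem
      cases e with
      | alloc x o c2 =>
        obtain ⟨v, rfl⟩ := hwfe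
        refine ⟨fun l hl => ?_, fun c' g hg => mono (ih.2 c' g hg)⟩
        simp only [Option.elim, step, Function.update_apply] at hl
        rw [if_neg (by simp)] at hl
        exact mono (ih.1 l hl)
      | assign x y =>
        refine ⟨fun l hl => ?_, fun c' g hg => mono (ih.2 c' g hg)⟩
        simp only [Option.elim, step, Function.update_apply] at hl
        by_cases hx : Sum.inr l = x
        · rw [if_pos hx] at hl
          subst hx
          cases y with
          | inl y => exact ⟨i, Nat.lt_succ_self i, l, y, h, hl⟩
          | inr l' => exact mono (ih.1 l' hl)
        · rw [if_neg hx] at hl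
          exact mono (ih.1 l hl)
      | load x y f =>
        refine ⟨fun l hl => ?_, fun c' g hg => mono (ih.2 c' g hg)⟩
        simp only [Option.elim, step, Function.update_apply] at hl
        rcases hwfe with ⟨a, b, g, rfl, rfl, rfl⟩ | ⟨a, b, g, rfl, rfl, rfl⟩
        · rw [if_neg (by simp)] at hl
          exact mono (ih.1 l hl)
        · by_cases hx : (Sum.inr l : V ⊕ LV) = Sum.inr a
          · rw [if_pos hx] at hl
            rcases hy : (stateAt σ0 tr i).env (Sum.inr b) with _ | c2
            · simp [hy] at hl
            · simp [hy] at hl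
              exact mono (ih.2 c2 g hl)
          · rw [if_neg hx] at hl
            exact mono (ih.1 l hl)
      | store x f y =>
        refine ⟨fun l hl => mono (ih.1 l hl), fun c' g hg => ?_⟩
        simp only [Option.elim, step] at hg
        split at hg
        · rename_i hcond
          rcases hwfe with ⟨a, b, g', rfl, rfl, rfl⟩ | ⟨a, b, g', rfl, rfl, rfl⟩
          · exact absurd hcond.2 (by simp)
          · exact mono (ih.1 b hg)
        · exact mono (ih.2 c' g hg)
      | call x m' y c2 => exact absurd hwfe (by simp [WfEv])
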